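/- Let w = r_0 ∘ r_5 ∘ r_0. For every 12-tuple y of nonzero complex numbers outside the hypersurfaces where some denominator in the composition vanishes, writing Y_{i,j,k} = 1 + y_i + y_iy_j + y_iy_jy_k, the following hold: (w(y))_1·(w(y))_12 = Y_{1,12,2}Y_{12,2,11}/(y_2y_12·Y_{2,11,1}Y_{11,1,12}); (w(y))_2 = Y_{2,11,1}/(y_11·Y_{1,12,2}); (w(y))_3 = y_1y_3y_11·Y_{12,2,11}/Y_{11,1,12}; (w(y))_4 = y_2y_4y_12·Y_{11,1,12}/Y_{12,2,11}; (w(y))_i = y_i for i = 5,6,7,8; (w(y))_9 = y_1y_9y_12·Y_{2,11,1}/Y_{1,12,2}; (w(y))_10 = y_2y_10y_11·Y_{1,12,2}/Y_{2,11,1}; (w(y))_11 = Y_{11,1,12}/(y_1·Y_{12,2,11}). -/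

import Mathlib

set_option maxHeartbeats 1000000


noncomputable section

/-- The birational transformation `r_i` attached to the quiver `Q_12` of the
`q`-Garnier system of fourth order, acting on 12-tuples of complex numbers
(indices read modulo 12). -/
def rG (i : ZMod 6) (y : ZMod 12 → ℂ) : ZMod 12 → ℂ := fun j =>
  let p : ZMod 12 := ((2 * i.val : ℕ) : ZMod 12)
  if j = p - 1 then y (p - 1) * y (p + 2) * (1 + y (p + 1)) / (1 + y (p + 2))
  else if j = p then y p * y (p + 1) * (1 + y (p + 2)) / (1 + y (p + 1))
  else if j = p + 1 then 1 / y (p + 2)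
  else if j = p + 2 then 1 / y (p + 1)
  else if j = p + 3 then y (p + 1) * y (p + 3) * (1 + y (p + 2)) / (1 + y (p + 1))
  else if j = p + 4 then y (p + 2) * y (p + 4) * (1 + y (p + 1)) / (1 + y (p + 2))
  else y j

/-- Genericity (all denominators of `r_i` nonzero and all coordinates nonzero). -/
def RG (i : ZMod 6) (y : ZMod 12 → ℂ) : Prop :=
  (∀ j, y j ≠ 0) ∧
    1 + y (((2 * i.val + 1 : ℕ) : ZMod 12)) ≠ 0 ∧
    1 + y (((2 * i.val + 2 : ℕ) : ZMod 12)) ≠ 0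

/-- `Y_{i,j,k} = 1 + y_i + y_i y_j + y_i y_j y_k`. -/
def Yt3 (y : ZMod 12 → ℂ) (i j k : ZMod 12) : ℂ :=
  1 + y i + y i * y j + y i * y j * y k

lemma rG0_apply (y : ZMod 12 → ℂ) (j : ZMod 12) :
    rG 0 y j = if j = 11 then y 11 * y 2 * (1 + y 1) / (1 + y 2)
      else if j = 0 then y 0 * y 1 * (1 + y 2) / (1 + y 1)
      else if j = 1 then 1 / y 2
      else if j = 2 then 1 / y 1
      else if j = 3 then y 1 * y 3 * (1 + y 2) / (1 + y 1)
      else if j = 4 then y 2 * y 4 * (1 + y 1) / (1 + y 2)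
      else y j := by
  simp only [rG, show ((2 * (0:ZMod 6).val : ℕ) : ZMod 12) = 0 from by decide,
    show (0:ZMod 12) - 1 = 11 from by decide, show (0:ZMod 12) + 1 = 1 from by decide,
    show (0:ZMod 12) + 2 = 2 from by decide, show (0:ZMod 12) + 3 = 3 from by decide,
    show (0:ZMod 12) + 4 = 4 from by decide]

lemma rG5_apply (y : ZMod 12 → ℂ) (j : ZMod 12) :
    rG 5 y j = if j = 9 then y 9 * y 0 * (1 + y 11) / (1 + y 0)
      else if j = 10 then y 10 * y 11 * (1 + y 0) / (1 + y 11)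
      else if j = 11 then 1 / y 0
      else if j = 0 then 1 / y 11
      else if j = 1 then y 11 * y 1 * (1 + y 0) / (1 + y 11)
      else if j = 2 then y 0 * y 2 * (1 + y 11) / (1 + y 0)
      else y j := by
  simp only [rG, show ((2 * (5:ZMod 6).val : ℕ) : ZMod 12) = 10 from by decide,
    show (10:ZMod 12) - 1 = 9 from by decide, show (10:ZMod 12) + 1 = 11 from by decide,
    show (10:ZMod 12) + 2 = 0 from by decide, show (10:ZMod 12) + 3 = 1 from by decide,
    show (10:ZMod 12) + 4 = 2 from by decide]

/-- Explicit formulas for the coordinates of `w = r_0 ∘ r_5 ∘ r_0`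
on a generic 12-tuple `y` of nonzero complex numbers. -/
theorem r0r5r0_formulas (y : ZMod 12 → ℂ) (hy : ∀ j, y j ≠ 0)
    (h0 : RG 0 y) (h5 : RG 5 (rG 0 y)) (h0' : RG 0 (rG 5 (rG 0 y))) :
    let w := rG 0 (rG 5 (rG 0 y))
    w 1 * w 12 = Yt3 y 1 12 2 * Yt3 y 12 2 11 /
        (y 2 * y 12 * (Yt3 y 2 11 1 * Yt3 y 11 1 12)) ∧
    w 2 = Yt3 y 2 11 1 / (y 11 * Yt3 y 1 12 2) ∧
    w 3 = y 1 * y 3 * y 11 * Yt3 y 12 2 11 / Yt3 y 11 1 12 ∧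
    w 4 = y 2 * y 4 * y 12 * Yt3 y 11 1 12 / Yt3 y 12 2 11 ∧
    w 5 = y 5 ∧ w 6 = y 6 ∧ w 7 = y 7 ∧ w 8 = y 8 ∧
    w 9 = y 1 * y 9 * y 12 * Yt3 y 2 11 1 / Yt3 y 1 12 2 ∧
    w 10 = y 2 * y 10 * y 11 * Yt3 y 1 12 2 / Yt3 y 2 11 1 ∧
    w 11 = Yt3 y 11 1 12 / (y 1 * Yt3 y 12 2 11) := by
  set a := rG 0 y with haD
  set b := rG 5 a with hbD
  intro w
  obtain ⟨-, h1, h2⟩ := h0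
  obtain ⟨-, h51, h52⟩ := h5
  obtain ⟨-, h01', h02'⟩ := h0'
  rw [show ((2 * (0:ZMod 6).val + 1 : ℕ) : ZMod 12) = 1 from by decide] at h1 h01'
  rw [show ((2 * (0:ZMod 6).val + 2 : ℕ) : ZMod 12) = 2 from by decide] at h2 h02'
  rw [show ((2 * (5:ZMod 6).val + 1 : ℕ) : ZMod 12) = 11 from by decide] at h51
  rw [show ((2 * (5:ZMod 6).val + 2 : ℕ) : ZMod 12) = 0 from by decide] at h52
  -- coordinates of a = rG 0 y
  have ha11 : a 11 = y 11 * y 2 * (1 + y 1) / (1 + y 2) := by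
    rw [haD]; simp (config := { decide := true }) [rG0_apply]
  have ha0 : a 0 = y 0 * y 1 * (1 + y 2) / (1 + y 1) := by
    rw [haD]; simp (config := { decide := true }) [rG0_apply]
  have ha1 : a 1 = 1 / y 2 := by
    rw [haD]; simp (config := { decide := true }) [rG0_apply]
  have ha2 : a 2 = 1 / y 1 := by
    rw [haD]; simp (config := { decide := true }) [rG0_apply]
  have ha3 : a 3 = y 1 * y 3 * (1 + y 2) / (1 + y 1) := by
    rw [haD]; simp (config := { decide := true }) [rG0_apply]
  have ha4 : a 4 = y 2 * y 4 * (1 + y 1) / (1 + y 2) := by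
    rw [haD]; simp (config := { decide := true }) [rG0_apply]
  have ha5 : a 5 = y 5 := by rw [haD]; simp (config := { decide := true }) [rG0_apply]
  have ha6 : a 6 = y 6 := by rw [haD]; simp (config := { decide := true }) [rG0_apply]
  have ha7 : a 7 = y 7 := by rw [haD]; simp (config := { decide := true }) [rG0_apply]
  have ha8 : a 8 = y 8 := by rw [haD]; simp (config := { decide := true }) [rG0_apply]
  have ha9 : a 9 = y 9 := by rw [haD]; simp (config := { decide := true }) [rG0_apply]
  have ha10 : a 10 = y 10 := by rw [haD]; simp (config := { decide := true }) [rG0_apply]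
  -- coordinates of b = rG 5 a
  have hb9 : b 9 = a 9 * a 0 * (1 + a 11) / (1 + a 0) := by
    rw [hbD]; simp (config := { decide := true }) [rG5_apply]
  have hb10 : b 10 = a 10 * a 11 * (1 + a 0) / (1 + a 11) := by
    rw [hbD]; simp (config := { decide := true }) [rG5_apply]
  have hb11 : b 11 = 1 / a 0 := by
    rw [hbD]; simp (config := { decide := true }) [rG5_apply]
  have hb0 : b 0 = 1 / a 11 := by
    rw [hbD]; simp (config := { decide := true }) [rG5_apply]
  have hb1 : b 1 = a 11 * a 1 * (1 + a 0) / (1 + a 11) := by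
    rw [hbD]; simp (config := { decide := true }) [rG5_apply]
  have hb2 : b 2 = a 0 * a 2 * (1 + a 11) / (1 + a 0) := by
    rw [hbD]; simp (config := { decide := true }) [rG5_apply]
  have hb3 : b 3 = a 3 := by rw [hbD]; simp (config := { decide := true }) [rG5_apply]
  have hb4 : b 4 = a 4 := by rw [hbD]; simp (config := { decide := true }) [rG5_apply]
  have hb5 : b 5 = a 5 := by rw [hbD]; simp (config := { decide := true }) [rG5_apply]
  have hb6 : b 6 = a 6 := by rw [hbD]; simp (config := { decide := true }) [rG5_apply]
  have hb7 : b 7 = a 7 := by rw [hbD]; simp (config := { decide := true }) [rG5_apply]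
  have hb8 : b 8 = a 8 := by rw [hbD]; simp (config := { decide := true }) [rG5_apply]
  -- coordinates of w = rG 0 b
  have hw11 : w 11 = b 11 * b 2 * (1 + b 1) / (1 + b 2) := by
    show rG 0 b 11 = _; simp (config := { decide := true }) [rG0_apply]
  have hw0 : w 0 = b 0 * b 1 * (1 + b 2) / (1 + b 1) := by
    show rG 0 b 0 = _; simp (config := { decide := true }) [rG0_apply]
  have hw1 : w 1 = 1 / b 2 := by
    show rG 0 b 1 = _; simp (config := { decide := true }) [rG0_apply]
  have hw2 : w 2 = 1 / b 1 := by
    show rG 0 b 2 = _; simp (config := { decide := true }) [rG0_apply]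
  have hw3 : w 3 = b 1 * b 3 * (1 + b 2) / (1 + b 1) := by
    show rG 0 b 3 = _; simp (config := { decide := true }) [rG0_apply]
  have hw4 : w 4 = b 2 * b 4 * (1 + b 1) / (1 + b 2) := by
    show rG 0 b 4 = _; simp (config := { decide := true }) [rG0_apply]
  have hw5 : w 5 = b 5 := by show rG 0 b 5 = _; simp (config := { decide := true }) [rG0_apply]
  have hw6 : w 6 = b 6 := by show rG 0 b 6 = _; simp (config := { decide := true }) [rG0_apply]
  have hw7 : w 7 = b 7 := by show rG 0 b 7 = _; simp (config := { decide := true }) [rG0_apply]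
  have hw8 : w 8 = b 8 := by show rG 0 b 8 = _; simp (config := { decide := true }) [rG0_apply]
  have hw9 : w 9 = b 9 := by show rG 0 b 9 = _; simp (config := { decide := true }) [rG0_apply]
  have hw10 : w 10 = b 10 := by show rG 0 b 10 = _; simp (config := { decide := true }) [rG0_apply]
  clear_value a b w
  -- nonzero facts
  have hy0 := hy 0; have hy1 := hy 1; have hy2 := hy 2; have hy11 := hy 11
  have hEa11 : 1 + a 11 = (1 + y 2 + y 2 * y 11 + y 2 * y 11 * y 1) / (1 + y 2) := by
    rw [ha11]; field_simp; ring
  have hEa0 : 1 + a 0 = (1 + y 1 + y 1 * y 0 + y 1 * y 0 * y 2) / (1 + y 1) := by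
    rw [ha0]; field_simp; ring
  have hN1 : 1 + y 1 + y 1 * y 0 + y 1 * y 0 * y 2 ≠ 0 := by
    intro h; exact h52 (by rw [hEa0, h, zero_div])
  have hN2 : 1 + y 2 + y 2 * y 11 + y 2 * y 11 * y 1 ≠ 0 := by
    intro h; exact h51 (by rw [hEa11, h, zero_div])
  -- simplified b coordinates
  have hb1' : b 1 = y 11 * (1 + y 1 + y 1 * y 0 + y 1 * y 0 * y 2) /
      (1 + y 2 + y 2 * y 11 + y 2 * y 11 * y 1) := by
    rw [hb1, hEa0, hEa11, ha11, ha1]; field_simp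
  have hb2' : b 2 = y 0 * (1 + y 2 + y 2 * y 11 + y 2 * y 11 * y 1) /
      (1 + y 1 + y 1 * y 0 + y 1 * y 0 * y 2) := by
    rw [hb2, hEa0, hEa11, ha0, ha2]; field_simp
  have hEb1 : 1 + b 1 = (1 + y 2) * (1 + y 11 + y 11 * y 1 + y 11 * y 1 * y 0) /
      (1 + y 2 + y 2 * y 11 + y 2 * y 11 * y 1) := by
    rw [hb1', eq_div_iff hN2, add_mul, div_mul_cancel₀ _ hN2]; ring
  have hEb2 : 1 + b 2 = (1 + y 1) * (1 + y 0 + y 0 * y 2 + y 0 * y 2 * y 11) /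
      (1 + y 1 + y 1 * y 0 + y 1 * y 0 * y 2) := by
    rw [hb2', eq_div_iff hN1, add_mul, div_mul_cancel₀ _ hN1]; ring
  have hN3 : 1 + y 11 + y 11 * y 1 + y 11 * y 1 * y 0 ≠ 0 := by
    intro h; exact h01' (by rw [hEb1, h, mul_zero, zero_div])
  have hN4 : 1 + y 0 + y 0 * y 2 + y 0 * y 2 * y 11 ≠ 0 := by
    intro h; exact h02' (by rw [hEb2, h, mul_zero, zero_div])
  simp only [Yt3, show (12:ZMod 12) = 0 from by decide]
  rw [hw0, hw1, hw2, hw3, hw4, hw5, hw6, hw7, hw8, hw9, hw10, hw11]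
  rw [hEb1, hEb2, hb9, hb10, hb11, hb0, hb1', hb2', hb3, hb4, hb5, hb6, hb7, hb8]
  rw [hEa11, hEa0, ha0, ha3, ha4, ha5, ha6, ha7, ha8, ha9, ha10, ha11]
  generalize hg1 : (1 + y 1 + y 1 * y 0 + y 1 * y 0 * y 2 : ℂ) = n1
  generalize hg2 : (1 + y 2 + y 2 * y 11 + y 2 * y 11 * y 1 : ℂ) = n2
  generalize hg3 : (1 + y 11 + y 11 * y 1 + y 11 * y 1 * y 0 : ℂ) = n3
  generalize hg4 : (1 + y 0 + y 0 * y 2 + y 0 * y 2 * y 11 : ℂ) = n4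
  generalize hgA : (1 + y 1 : ℂ) = A
  generalize hgB : (1 + y 2 : ℂ) = B
  rw [hg1] at hN1; rw [hg2] at hN2; rw [hg3] at hN3; rw [hg4] at hN4
  rw [hgA] at h1; rw [hgB] at h2
  refine ⟨?_, ?_, ?_, ?_, rfl, rfl, rfl, rfl, ?_, ?_, ?_⟩
  all_goals field_simp [hy0, hy1, hy2, hy11, h1, h2, hN1, hN2, hN3, hN4]
  all_goals try rw [div_eq_iff
    (by simp [mul_eq_zero, hy0, hy1, hy2, hy11, h1, h2, hN1, hN2, hN3, hN4])]
  all_goals ring
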